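/- Let R be a 2-adic complete DVR with uniformizer t (t²/2 a unit times (1+tR)) and let 𝔤 be a free R-module of rank 1 with basis y, d(y) = ty, abelian bracket. Then U(𝔤) := S𝔤 with the relation coming from twisted skew-symmetry equals R[y]/(2y²); its R-torsion submodule is the ideal generated by y², and the quotient by torsion is R[y]/(y²), which is a free R-module with basis 1, y. -/

import Mathlib

open Polynomial

set_option maxHeartbeats 1000000

/-- Let `R` be a 2-adic complete DVR with uniformizer `t` (so
`t²·c = 2` for a unit `c`).  For the rank-1 module `𝔤 = R·y` with `d y = t y` and
abelian bracket, the enveloping algebra is `U(𝔤) = R[y]/(2y²)`.  Its `R`-torsion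
submodule is the ideal generated by `y²`, and the quotient by the torsion is
`R[y]/(y²)`, a free `R`-module with basis `1, y`. -/
theorem stmt16 (R : Type*) [CommRing R] [IsDomain R] [IsDiscreteValuationRing R]
    [IsLocalRing R] [IsAdicComplete (IsLocalRing.maximalIdeal R) R]
    (t : R) (ht : Irreducible t) (c : R) (hc : t ^ 2 * c = 2) (hcu : IsUnit c) :
    letI A := Polynomial R ⧸ Ideal.span {(C (2 : R)) * (X : Polynomial R) ^ 2}
    Submodule.torsion R A =
      (Ideal.span {Ideal.Quotient.mk
          (Ideal.span {(C (2 : R)) * (X : Polynomial R) ^ 2})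
          ((X : Polynomial R) ^ 2)}).restrictScalars R ∧
    Nonempty ((A ⧸ Submodule.torsion R A) ≃ₗ[R]
      (Polynomial R ⧸ Ideal.span {(X : Polynomial R) ^ 2})) ∧
    ∃ B : Module.Basis (Fin 2) R (Polynomial R ⧸ Ideal.span {(X : Polynomial R) ^ 2}),
      B 0 = 1 ∧
      B 1 = Ideal.Quotient.mk (Ideal.span {(X : Polynomial R) ^ 2}) X := by
  have h2 : (2 : R) ≠ 0 := by
    intro h
    rw [h] at hc
    exact mul_ne_zero (pow_ne_zero _ ht.ne_zero) hcu.ne_zero hc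
  set I : Ideal (Polynomial R) := Ideal.span {(C (2 : R)) * (X : Polynomial R) ^ 2} with hI
  set J : Ideal (Polynomial R ⧸ I) :=
    Ideal.span {Ideal.Quotient.mk I ((X : Polynomial R) ^ 2)} with hJ
  have hsmul : ∀ (r : R) (f : Polynomial R),
      r • Ideal.Quotient.mk I f = Ideal.Quotient.mk I (C r * f) := by
    intro r f
    rw [← smul_eq_C_mul, ← Ideal.Quotient.mkₐ_eq_mk R I, map_smul]
  have hT : Submodule.torsion R (Polynomial R ⧸ I) = J.restrictScalars R := by
    ext x
    obtain ⟨f, rfl⟩ := Ideal.Quotient.mk_surjective x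
    rw [Submodule.mem_torsion_iff, Submodule.restrictScalars_mem, hJ,
      Ideal.mem_span_singleton]
    constructor
    · rintro ⟨⟨r, hr⟩, hx⟩
      have hr0 : r ≠ 0 := nonZeroDivisors.ne_zero hr
      have h0 : Ideal.Quotient.mk I (C r * f) = 0 := by
        rw [← hsmul]; exact hx
      rw [Ideal.Quotient.eq_zero_iff_mem, hI, Ideal.mem_span_singleton] at h0
      have hdvd : (X : Polynomial R) ^ 2 ∣ C r * f :=
        dvd_trans ⟨C 2, by ring⟩ h0
      rw [X_pow_dvd_iff] at hdvd
      have hf : (X : Polynomial R) ^ 2 ∣ f := by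
        rw [X_pow_dvd_iff]
        intro d hd
        have := hdvd d hd
        rw [coeff_C_mul] at this
        exact (mul_eq_zero.mp this).resolve_left hr0
      obtain ⟨g, rfl⟩ := hf
      exact ⟨Ideal.Quotient.mk I g, by rw [map_mul]⟩
    · rintro ⟨a, ha⟩
      obtain ⟨g, rfl⟩ := Ideal.Quotient.mk_surjective a
      refine ⟨⟨2, mem_nonZeroDivisors_of_ne_zero h2⟩, ?_⟩
      show (2 : R) • Ideal.Quotient.mk I f = 0
      rw [ha, ← map_mul, hsmul, Ideal.Quotient.eq_zero_iff_mem, hI,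
        Ideal.mem_span_singleton]
      exact ⟨g, by ring⟩
  refine ⟨hT, ?_, ?_⟩
  · have hle : I ≤ Ideal.span {(X : Polynomial R) ^ 2} := by
      rw [hI, Ideal.span_le, Set.singleton_subset_iff]
      rw [SetLike.mem_coe, Ideal.mem_span_singleton]
      exact ⟨C 2, by ring⟩
    have hJmap : Ideal.map (Ideal.Quotient.mkₐ R I) (Ideal.span {(X : Polynomial R) ^ 2}) = J := by
      rw [Ideal.map_span, Set.image_singleton, hJ, Ideal.Quotient.mkₐ_eq_mk]
    have e2 : ((Polynomial R ⧸ I) ⧸ J) ≃ₗ[R] Polynomial R ⧸ Ideal.span {(X : Polynomial R) ^ 2} := by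
      rw [← hJmap]
      exact (DoubleQuot.quotQuotEquivQuotOfLEₐ R hle).toLinearEquiv
    rw [hT]
    exact ⟨(Submodule.Quotient.restrictScalarsEquiv R J).trans e2⟩
  · have hm : ((X : Polynomial R) ^ 2).Monic := monic_X_pow 2
    have hdim : (AdjoinRoot.powerBasis' hm).dim = 2 := by
      rw [AdjoinRoot.powerBasis'_dim, natDegree_X_pow]
    refine ⟨((AdjoinRoot.powerBasis' hm).basis.reindex (finCongr hdim)), ?_, ?_⟩
    · show ((AdjoinRoot.powerBasis' hm).basis.reindex (finCongr hdim)) 0 =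
        (1 : AdjoinRoot ((X : Polynomial R) ^ 2))
      rw [Module.Basis.reindex_apply, PowerBasis.basis_eq_pow]
      simp
    · show ((AdjoinRoot.powerBasis' hm).basis.reindex (finCongr hdim)) 1 =
        AdjoinRoot.mk ((X : Polynomial R) ^ 2) X
      rw [Module.Basis.reindex_apply, PowerBasis.basis_eq_pow, AdjoinRoot.powerBasis'_gen]
      have h1 : ((((finCongr hdim).symm 1) : Fin _) : ℕ) = 1 := rfl
      rw [h1, pow_one]
      rfl
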